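/- Let N ≥ 1, let A be an N×N Hermitian complex matrix, and let g : ℝ → ℝ be continuous and monotone (non-decreasing). Then for every N×N complex matrix X, the trace tr([X, g(A)]† · [X, A]) is a nonnegative real number, where g(A) denotes the matrix obtained by applying g to A via the continuous functional calculus (equivalently, by applying g to the eigenvalues of A in a spectral decomposition). -/

import Mathlib

open Matrix

lemma trace_aux {n : ℕ} (Y : Matrix (Fin n) (Fin n) ℂ) (c d : Fin n → Fin n → ℝ) :
    Matrix.trace ((Matrix.of (fun i j => Y i j * ((c i j : ℝ) : ℂ)))ᴴ *
        (Matrix.of (fun i j => Y i j * ((d i j : ℝ) : ℂ)))) =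
      ((∑ i, ∑ j, Complex.normSq (Y j i) * (c j i * d j i) : ℝ) : ℂ) := by
  simp only [Matrix.trace, Matrix.diag, Matrix.mul_apply, Matrix.conjTranspose_apply,
    Matrix.of_apply]
  push_cast
  congr 1
  ext i
  congr 1
  ext j
  rw [Complex.normSq_eq_conj_mul_self]
  push_cast
  simp only [star_mul', RingHom.map_mul, Complex.star_def, Complex.conj_ofReal]
  ring

/-- for a Hermitian matrix `A`, a continuous monotone `g : ℝ → ℝ`, and any
matrix `X`, the trace `tr([X, g(A)]† [X, A])` is a nonnegative real number, where `g(A)` is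
the continuous functional calculus `cfc g A`. -/
theorem trace_commutator_cfc_monotone_nonneg
    {N : ℕ} (hN : 1 ≤ N) (A : Matrix (Fin N) (Fin N) ℂ) (hA : A.IsHermitian)
    (g : ℝ → ℝ) (hg_cont : Continuous g) (hg_mono : Monotone g)
    (X : Matrix (Fin N) (Fin N) ℂ) :
    ∃ r : ℝ, 0 ≤ r ∧
      Matrix.trace ((X * cfc g A - cfc g A * X)ᴴ * (X * A - A * X)) = (r : ℂ) := by
  classical
  set a := hA.eigenvalues with ha
  set U : Matrix (Fin N) (Fin N) ℂ := (hA.eigenvectorUnitary : Matrix (Fin N) (Fin N) ℂ) with hU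
  have hUU : Uᴴ * U = 1 := by
    simpa [star_eq_conjTranspose] using Matrix.mem_unitaryGroup_iff'.mp hA.eigenvectorUnitary.2
  have hUU' : U * Uᴴ = 1 := by
    simpa [star_eq_conjTranspose] using Matrix.mem_unitaryGroup_iff.mp hA.eigenvectorUnitary.2
  set Y : Matrix (Fin N) (Fin N) ℂ := Uᴴ * X * U with hY
  have key : ∀ (f : ℝ → ℝ),
      X * (U * diagonal (fun i => ((f (a i) : ℝ) : ℂ)) * Uᴴ)
        - (U * diagonal (fun i => ((f (a i) : ℝ) : ℂ)) * Uᴴ) * X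
      = U * Matrix.of (fun i j => Y i j * (((f (a j) - f (a i)) : ℝ) : ℂ)) * Uᴴ := by
    intro f
    set D := diagonal (fun i => ((f (a i) : ℝ) : ℂ)) with hD
    have h1 : Matrix.of (fun i j => Y i j * (((f (a j) - f (a i)) : ℝ) : ℂ)) = Y * D - D * Y := by
      ext i j
      simp only [hD, Matrix.sub_apply, Matrix.mul_diagonal, Matrix.diagonal_mul, Matrix.of_apply]
      push_cast
      ring
    rw [h1, Matrix.mul_sub, Matrix.sub_mul, hY]
    congr 1
    · simp only [Matrix.mul_assoc]
      rw [← Matrix.mul_assoc U Uᴴ, hUU', Matrix.one_mul]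
    · simp only [Matrix.mul_assoc]
      rw [hUU', Matrix.mul_one]
  have hAeq : A = U * diagonal (fun i => ((a i : ℝ) : ℂ)) * Uᴴ := by
    exact hA.spectral_theorem
  have hgA : cfc g A = U * diagonal (fun i => ((g (a i) : ℝ) : ℂ)) * Uᴴ := by
    rw [hA.cfc_eq]
    rfl
  have hM : X * cfc g A - cfc g A * X
      = U * Matrix.of (fun i j => Y i j * (((g (a j) - g (a i)) : ℝ) : ℂ)) * Uᴴ := by
    rw [hgA]; exact key g
  have hNmat : X * A - A * X
      = U * Matrix.of (fun i j => Y i j * (((a j - a i) : ℝ) : ℂ)) * Uᴴ := by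
    conv_lhs => rw [hAeq]
    exact key id
  set M1 := Matrix.of (fun i j => Y i j * (((g (a j) - g (a i)) : ℝ) : ℂ)) with hM1
  set M2 := Matrix.of (fun i j => Y i j * (((a j - a i) : ℝ) : ℂ)) with hM2
  have htr : Matrix.trace ((X * cfc g A - cfc g A * X)ᴴ * (X * A - A * X))
      = Matrix.trace (M1ᴴ * M2) := by
    rw [hM, hNmat, Matrix.conjTranspose_mul, Matrix.conjTranspose_mul,
      Matrix.conjTranspose_conjTranspose]
    have e : U * (M1ᴴ * Uᴴ) * (U * M2 * Uᴴ) = U * (M1ᴴ * (M2 * Uᴴ)) := by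
      simp only [Matrix.mul_assoc]
      rw [← Matrix.mul_assoc Uᴴ U, hUU, Matrix.one_mul]
    rw [e, Matrix.trace_mul_comm]
    simp only [Matrix.mul_assoc]
    rw [hUU, Matrix.mul_one]
  refine ⟨∑ i, ∑ j, Complex.normSq (Y j i) * ((g (a i) - g (a j)) * (a i - a j)), ?_, ?_⟩
  · apply Finset.sum_nonneg; intro i _
    apply Finset.sum_nonneg; intro j _
    apply mul_nonneg (Complex.normSq_nonneg _)
    rcases le_total (a j) (a i) with h | h
    · exact mul_nonneg (sub_nonneg.mpr (hg_mono h)) (sub_nonneg.mpr h)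
    · nlinarith [mul_nonneg (sub_nonneg.mpr (hg_mono h)) (sub_nonneg.mpr h)]
  · rw [htr, hM1, hM2]
    exact trace_aux Y (fun i j => g (a j) - g (a i)) (fun i j => a j - a i)
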